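/- A standard run of any Heard-Of collection is a run of any Delivered predicate that contains the total Delivered collection (the collection where every process's Delivered set at every round is the full set of processes Π). -/

import Mathlib

open Classical

/-- A collection (Delivered or Heard-Of): for each round `r > 0` and process `j`,
the set of processes from which `j` receives (resp. hears of) the round-`r` message. -/
abbrev Collection (n : ℕ) := ℕ → Fin n → Finset (Fin n)

abbrev DeliveredPred (n : ℕ) := Set (Collection n)

/-- The total collection: every Delivered set is all of `Π`. -/
def totalCollection (n : ℕ) : Collection n := fun _ _ => Finset.univ

/-- Local state of a process: its current round and the set of
(round, sender) pairs of delivered messages. -/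
structure ProcState (n : ℕ) where
  round : ℕ
  received : Set (ℕ × Fin n)

/-- A strategy: the set of local states in which a process may change round. -/
abbrev Strategy (n : ℕ) := Set (ProcState n)

inductive Transition (n : ℕ) where
  | next (j : Fin n)
  | deliver (r : ℕ) (k j : Fin n)
  | fin

/-- Effect of a transition on a global state. -/
def applyTr {n : ℕ} (τ : Transition n) (s : Fin n → ProcState n) : Fin n → ProcState n :=
  match τ with
  | .next j => Function.update s j ⟨(s j).round + 1, (s j).received⟩
  | .deliver r k j => Function.update s j ⟨(s j).round, insert (r, k) (s j).received⟩
  | .fin => s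

def initState (n : ℕ) : Fin n → ProcState n := fun _ => ⟨1, ∅⟩

def stFromTr {n : ℕ} (tr : ℕ → Transition n) : ℕ → Fin n → ProcState n
  | 0 => initState n
  | i + 1 => applyTr (tr i) (stFromTr tr i)

/-- A (finite or infinite) run: a length in `ℕ∞`, the global state before each step,
and the transition taken at each step. -/
structure Run (n : ℕ) where
  len : ℕ∞
  st : ℕ → Fin n → ProcState n
  tr : ℕ → Transition n

namespace Run
variable {n : ℕ}

def inRange (t : Run n) (i : ℕ) : Prop := (i : ℕ∞) < t.len

/-- `t` is a run: initial state, transition semantics, `end` only as last step,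
delivery after sending, unique delivery. -/
def IsRun (t : Run n) : Prop :=
  (∀ j, t.st 0 j = ⟨1, ∅⟩) ∧
  (∀ i, t.inRange i → t.st (i + 1) = applyTr (t.tr i) (t.st i)) ∧
  (∀ i, t.inRange i → t.tr i = Transition.fin → (i : ℕ∞) + 1 = t.len) ∧
  (∀ i, t.inRange i → ∀ r k j, t.tr i = Transition.deliver r k j → r ≤ (t.st i k).round) ∧
  (∀ r k j i i', t.inRange i → t.inRange i' → t.tr i = Transition.deliver r k j →
      t.tr i' = Transition.deliver r k j → i = i')

/-- `t` is a run of the Delivered collection `CDel`: the message `(r,k)` is delivered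
to `j` iff `k ∈ CDel r j` and `j` eventually reaches round `r`. -/
def RunOf (t : Run n) (CDel : Collection n) : Prop :=
  t.IsRun ∧
  ∀ r k j, 0 < r →
    ((k ∈ CDel r j ∧ ∃ i, t.inRange i ∧ r ≤ (t.st i j).round) ↔
      ∃ i, t.inRange i ∧ t.tr i = Transition.deliver r k j)

def RunOfPred (t : Run n) (PDel : DeliveredPred n) : Prop :=
  ∃ CDel ∈ PDel, t.RunOf CDel

/-- A run is valid when every process changes round infinitely often. -/
def Valid (t : Run n) : Prop :=
  ∀ j, {i | t.inRange i ∧ t.tr i = Transition.next j}.Infinite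

/-- A run generated by a strategy `f`: next only if allowed, plus the fairness conditions. -/
def GeneratedBy (t : Run n) (f : Strategy n) : Prop :=
  (∀ i, t.inRange i → ∀ j, t.tr i = Transition.next j → t.st i j ∈ f) ∧
  (t.len = ⊤ → ∀ j, {i | t.tr i = Transition.next j}.Finite →
      {i | t.st i j ∉ f}.Infinite) ∧
  (∀ L : ℕ, t.len = (L : ℕ∞) → ∀ j, t.st (L - 1) j ∉ f)

end Run

def runsGen {n : ℕ} (f : Strategy n) (PDel : DeliveredPred n) : Set (Run n) :=
  {t | t.GeneratedBy f ∧ t.RunOfPred PDel}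

/-- A strategy is valid for a Delivered predicate when all its generated runs are valid. -/
def Strategy.ValidFor {n : ℕ} (f : Strategy n) (PDel : DeliveredPred n) : Prop :=
  ∀ t ∈ runsGen f PDel, t.Valid

/-- The Heard-Of collection of a run: `k ∈ CHO t r j` iff `j` had received the round-`r`
message of `k` when it performed `next` at round `r`. -/
noncomputable def CHO {n : ℕ} (t : Run n) : Collection n := fun r j =>
  (Set.toFinite {k | ∃ i, t.inRange i ∧ t.tr i = Transition.next j ∧
    (t.st i j).round = r ∧ (r, k) ∈ (t.st i j).received}).toFinset

/-- The Heard-Of predicate generated by a strategy on a Delivered predicate. -/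
noncomputable def PHO {n : ℕ} (f : Strategy n) (PDel : DeliveredPred n) : Set (Collection n) :=
  {c | ∃ t, t ∈ runsGen f PDel ∧ t.Valid ∧ CHO t = c}

/- Standard run of a Heard-Of collection. -/

noncomputable def lateList {n : ℕ} (cho : Collection n) (r : ℕ) : List (Transition n) :=
  if r ≤ 1 then [] else
    (List.finRange n).flatMap fun j =>
      ((Finset.univ \ cho (r - 1) j).toList).map fun k => Transition.deliver (r - 1) k j

noncomputable def onTimeList {n : ℕ} (cho : Collection n) (r : ℕ) : List (Transition n) :=
  (List.finRange n).flatMap fun j => ((cho r j).toList).map fun k => Transition.deliver r k j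

def nextsList (n : ℕ) : List (Transition n) := (List.finRange n).map Transition.next

noncomputable def stdBlock {n : ℕ} (cho : Collection n) (r : ℕ) : List (Transition n) :=
  lateList cho r ++ onTimeList cho r ++ nextsList n

noncomputable def stdTr {n : ℕ} (cho : Collection n) (i : ℕ) : Transition n :=
  (((List.range (i + 1)).map fun m => stdBlock cho (m + 1)).flatten).getD i Transition.fin

/-- The standard run of a Heard-Of collection: at each round, late messages,
then on-time messages, then all `next`s, in lockstep. -/
noncomputable def standardRun {n : ℕ} (cho : Collection n) : Run n :=
  ⟨⊤, stFromTr (stdTr cho), stdTr cho⟩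

/- Earliest run of a strategy for a Delivered collection. -/

noncomputable def eDels {n : ℕ} (CDel : Collection n) (s : Fin n → ProcState n) :
    List (Transition n) :=
  (List.finRange n).flatMap fun j =>
    (((CDel (s j).round j).toList).filter fun k =>
        decide (((s j).round, k) ∉ (s j).received)).map
      fun k => Transition.deliver (s j).round k j

noncomputable def eStep {n : ℕ} (CDel : Collection n) (f : Strategy n)
    (s : Fin n → ProcState n) : List (Transition n) × (Fin n → ProcState n) :=
  let dl := eDels CDel s
  let s' := dl.foldl (fun st τ => applyTr τ st) s
  let nx := ((List.finRange n).filter fun j => decide (s' j ∈ f)).map Transition.next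
  let s'' := nx.foldl (fun st τ => applyTr τ st) s'
  (dl ++ nx, s'')

noncomputable def eIter {n : ℕ} (CDel : Collection n) (f : Strategy n) :
    ℕ → Fin n → ProcState n
  | 0 => initState n
  | r + 1 => (eStep CDel f (eIter CDel f r)).2

noncomputable def eBlock {n : ℕ} (CDel : Collection n) (f : Strategy n) (r : ℕ) :
    List (Transition n) :=
  (eStep CDel f (eIter CDel f r)).1

noncomputable def eTr {n : ℕ} (CDel : Collection n) (f : Strategy n) (i : ℕ) : Transition n :=
  (((List.range (i + 1)).map (eBlock CDel f)).flatten).getD i Transition.fin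

noncomputable def eLen {n : ℕ} (CDel : Collection n) (f : Strategy n) : ℕ∞ :=
  if (⨆ R : ℕ, (((List.range R).map (eBlock CDel f)).flatten.length : ℕ∞)) = ⊤ then ⊤
  else (⨆ R : ℕ, (((List.range R).map (eBlock CDel f)).flatten.length : ℕ∞)) + 1

/-- The earliest run of strategy `f` for Delivered collection `CDel`: in each iteration all
not-yet-delivered messages of current rounds are delivered, then all allowed processes
change round; ends with `end` if no process can ever change round again. -/
noncomputable def earliestRun {n : ℕ} (CDel : Collection n) (f : Strategy n) : Run n :=
  ⟨eLen CDel f, stFromTr (eTr CDel f), eTr CDel f⟩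

/- Carefree and reactionary strategies, and the particular predicates studied. -/

/-- Senders of current-round messages received. -/
def cfree {n : ℕ} (q : ProcState n) : Set (Fin n) := {k | (q.round, k) ∈ q.received}

def Carefree {n : ℕ} (f : Strategy n) : Prop :=
  ∀ q q' : ProcState n, cfree q = cfree q' → (q ∈ f ↔ q' ∈ f)

def Nexts {n : ℕ} (f : Strategy n) : Set (Set (Fin n)) := {s | ∃ q ∈ f, cfree q = s}

/-- The strategy waiting for at least `n - F` current-round messages. -/
def fThresh (n F : ℕ) : Strategy n := {q | n - F ≤ (cfree q).ncard}

/-- The kernel of round `r`. -/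
def kernelC {n : ℕ} (CDel : Collection n) (r : ℕ) : Finset (Fin n) :=
  Finset.univ.inf (CDel r)

/-- Delivered predicate of the asynchronous model with reliable communication and
at most `F` permanent crashes. -/
def PDelF (n F : ℕ) : DeliveredPred n :=
  {CDel | ∀ r, 0 < r → ∀ j, n - F ≤ (CDel r j).card ∧ CDel (r + 1) j ⊆ kernelC CDel r}

/-- The carefree strategy whose `Nexts` is the set of all Delivered sets of `PDel`. -/
def cfDom {n : ℕ} (PDel : DeliveredPred n) : Strategy n :=
  {q | ∃ CDel ∈ PDel, ∃ r, 0 < r ∧ ∃ j, cfree q = ↑(CDel r j)}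

def DeliveredSets {n : ℕ} (PDel : DeliveredPred n) : Set (Finset (Fin n)) :=
  {D | ∃ CDel ∈ PDel, ∃ r, 0 < r ∧ ∃ j, CDel r j = D}

def RoundSymmetric {n : ℕ} (PDel : DeliveredPred n) : Prop :=
  totalCollection n ∈ PDel ∧
  ∀ D ∈ DeliveredSets PDel, ∀ r, 0 < r →
    ∃ CDel ∈ PDel, ∀ j, (∀ r', 0 < r' → r' < r → CDel r' j = Finset.univ) ∧ CDel r j = D

/-- Delivered predicate for at most `B` failed broadcasts per round. -/
def PDelB (n B : ℕ) : DeliveredPred n :=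
  {CDel | ∀ r, 0 < r → ∀ j, CDel r j = kernelC CDel r ∧ n - B ≤ (kernelC CDel r).card}

/-- Round and past-and-present received messages. -/
def reac {n : ℕ} (q : ProcState n) : ℕ × Set (ℕ × Fin n) :=
  (q.round, {p ∈ q.received | p.1 ≤ q.round})

def Reactionary {n : ℕ} (f : Strategy n) : Prop :=
  ∀ q q' : ProcState n, reac q = reac q' → (q ∈ f ↔ q' ∈ f)

def NextsR {n : ℕ} (f : Strategy n) : Set (ℕ × Set (ℕ × Fin n)) := {p | ∃ q ∈ f, reac q = p}

/-- The full past-and-present received set at round `r` of process `j` in `CDel`. -/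
def pastSet {n : ℕ} (CDel : Collection n) (r : ℕ) (j : Fin n) : Set (ℕ × Fin n) :=
  {p | 0 < p.1 ∧ p.1 ≤ r ∧ p.2 ∈ CDel p.1 j}

/-- The reactionary strategy whose `Nexts^R` is the set of all past-and-present
pairs of `PDel`. -/
def rcDom {n : ℕ} (PDel : DeliveredPred n) : Strategy n :=
  {q | ∃ CDel ∈ PDel, ∃ r, 0 < r ∧ ∃ j, reac q = (r, pastSet CDel r j)}

/-- Delivered predicate for at most `F` initial crashes. -/
def PDelIni (n F : ℕ) : DeliveredPred n :=
  {CDel | ∃ S : Finset (Fin n), n - F ≤ S.card ∧ ∀ r, 0 < r → ∀ j, CDel r j = S}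

/-- The past-complete strategy. -/
def fpc (n F : ℕ) : Strategy n :=
  {q | 0 < q.round ∧ ∃ S : Finset (Fin n), n - F ≤ S.card ∧
    {p ∈ q.received | p.1 ≤ q.round} =
      {p : ℕ × Fin n | 1 ≤ p.1 ∧ p.1 ≤ q.round ∧ p.2 ∈ S}}

/- ====== Auxiliary development for STATEMENT 0 ====== -/

deriving instance DecidableEq for Transition

namespace StdAux

variable {n : ℕ}

noncomputable def dF (cho : Collection n) (R : ℕ) : List (Transition n) :=
  ((List.range R).map fun m => stdBlock cho (m + 1)).flatten

lemma dF_succ (cho : Collection n) (R : ℕ) :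
    dF cho (R + 1) = dF cho R ++ stdBlock cho (R + 1) := by
  simp [dF, List.range_succ]

lemma block_len (cho : Collection n) (r : ℕ) : n ≤ (stdBlock cho r).length := by
  simp [stdBlock, nextsList]
  omega

lemma dF_len (hn : 0 < n) (cho : Collection n) (R : ℕ) : R ≤ (dF cho R).length := by
  induction R with
  | zero => simp
  | succ R ih =>
    have := block_len cho (R + 1)
    rw [dF_succ, List.length_append]
    omega

lemma dF_prefix (cho : Collection n) {R R' : ℕ} (h : R ≤ R') : dF cho R <+: dF cho R' := by
  induction R' with
  | zero => simp_all
  | succ R' ih =>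
    rcases Nat.lt_or_ge R (R' + 1) with h' | h'
    · exact (ih (by omega)).trans (by rw [dF_succ]; exact List.prefix_append _ _)
    · have : R = R' + 1 := by omega
      subst this; exact List.prefix_refl _

lemma stdTr_eq (hn : 0 < n) (cho : Collection n) {R i : ℕ} (h : i < (dF cho R).length) :
    stdTr cho i = (dF cho R).getD i Transition.fin := by
  have h1 : i < (dF cho (i + 1)).length :=
    lt_of_lt_of_le (Nat.lt_succ_self i) (dF_len hn cho (i + 1))
  have h0 : stdTr cho i = (dF cho (i + 1)).getD i Transition.fin := rfl
  rw [h0, List.getD_eq_getElem _ _ h1, List.getD_eq_getElem _ _ h]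
  rcases le_total (i + 1) R with hR | hR
  · exact (dF_prefix cho hR).getElem h1
  · exact ((dF_prefix cho hR).getElem h).symm

lemma deliver_mem_lateList {cho : Collection n} {ρ r : ℕ} {k j : Fin n} :
    Transition.deliver r k j ∈ lateList cho ρ ↔ 2 ≤ ρ ∧ r = ρ - 1 ∧ k ∉ cho (ρ - 1) j := by
  unfold lateList
  split
  · next h => simp; omega
  · next h =>
    constructor
    · intro hmem
      rw [List.mem_flatMap] at hmem
      obtain ⟨j', -, hmem⟩ := hmem
      rw [List.mem_map] at hmem
      obtain ⟨k', hk', he⟩ := hmem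
      obtain ⟨h1, h2, h3⟩ := Transition.deliver.inj he
      subst h1; subst h2; subst h3
      rw [Finset.mem_toList, Finset.mem_sdiff] at hk'
      exact ⟨by omega, rfl, hk'.2⟩
    · rintro ⟨h2, rfl, hk⟩
      rw [List.mem_flatMap]
      exact ⟨j, List.mem_finRange j, List.mem_map.2
        ⟨k, Finset.mem_toList.2 (Finset.mem_sdiff.2 ⟨Finset.mem_univ k, hk⟩), rfl⟩⟩

lemma deliver_mem_onTimeList {cho : Collection n} {ρ r : ℕ} {k j : Fin n} :
    Transition.deliver r k j ∈ onTimeList cho ρ ↔ r = ρ ∧ k ∈ cho ρ j := by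
  unfold onTimeList
  constructor
  · intro hmem
    rw [List.mem_flatMap] at hmem
    obtain ⟨j', -, hmem⟩ := hmem
    rw [List.mem_map] at hmem
    obtain ⟨k', hk', he⟩ := hmem
    obtain ⟨h1, h2, h3⟩ := Transition.deliver.inj he
    subst h1; subst h2; subst h3
    rw [Finset.mem_toList] at hk'
    exact ⟨rfl, hk'⟩
  · rintro ⟨rfl, hk⟩
    rw [List.mem_flatMap]
    exact ⟨j, List.mem_finRange j, List.mem_map.2 ⟨k, Finset.mem_toList.2 hk, rfl⟩⟩

lemma mem_nextsList {τ : Transition n} : τ ∈ nextsList n ↔ ∃ j, τ = Transition.next j := by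
  unfold nextsList
  simp only [List.mem_map, List.mem_finRange]
  constructor
  · rintro ⟨j, -, rfl⟩; exact ⟨j, rfl⟩
  · rintro ⟨j, rfl⟩; exact ⟨j, trivial, rfl⟩

lemma isDel_of_mem_DL {cho : Collection n} {ρ : ℕ} {τ : Transition n}
    (h : τ ∈ lateList cho ρ ++ onTimeList cho ρ) :
    ∃ r k j, τ = Transition.deliver r k j := by
  rcases List.mem_append.1 h with h | h
  · unfold lateList at h
    split at h
    · simp at h
    · simp only [List.mem_flatMap, List.mem_map] at h
      obtain ⟨j, -, k, -, rfl⟩ := h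
      exact ⟨_, _, _, rfl⟩
  · unfold onTimeList at h
    simp only [List.mem_flatMap, List.mem_map] at h
    obtain ⟨j, -, k, -, rfl⟩ := h
    exact ⟨_, _, _, rfl⟩

lemma round_applyTr_deliver (r : ℕ) (k j : Fin n) (s : Fin n → ProcState n) (j' : Fin n) :
    ((applyTr (Transition.deliver r k j) s) j').round = (s j').round := by
  simp only [applyTr, Function.update_apply]
  split
  · next h => subst h; rfl
  · rfl

lemma round_foldl_deliver (l : List (Transition n))
    (hl : ∀ τ ∈ l, ∃ r k j, τ = Transition.deliver r k j) :
    ∀ s j', ((l.foldl (fun st τ => applyTr τ st) s) j').round = (s j').round := by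
  induction l with
  | nil => intro s j'; rfl
  | cons τ l ih =>
    intro s j'
    obtain ⟨r, k, j, rfl⟩ := hl τ List.mem_cons_self
    rw [List.foldl_cons, ih (fun τ h => hl τ (List.mem_cons_of_mem _ h)),
      round_applyTr_deliver]

lemma round_foldl_next (l : List (Fin n)) :
    ∀ (s : Fin n → ProcState n) (j : Fin n),
      (((l.map Transition.next).foldl (fun st τ => applyTr τ st) s) j).round
        = (s j).round + l.count j := by
  induction l with
  | nil => intro s j; simp
  | cons a l ih =>
    intro s j
    rw [List.map_cons, List.foldl_cons, ih, List.count_cons]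
    show ((Function.update s a ⟨(s a).round + 1, (s a).received⟩) j).round + _ = _
    by_cases h : j = a
    · subst h
      rw [Function.update_self, if_pos (by simp)]
      show (s j).round + 1 + List.count j l = (s j).round + (List.count j l + 1)
      omega
    · rw [Function.update_of_ne h, if_neg (by simpa using fun e => h e.symm)]
      omega

lemma stFromTr_add (tr : ℕ → Transition n) (a : ℕ) (l : List (Transition n))
    (h : ∀ d (hd : d < l.length), tr (a + d) = l[d]) :
    stFromTr tr (a + l.length) = l.foldl (fun st τ => applyTr τ st) (stFromTr tr a) := by
  induction l generalizing a with
  | nil => rfl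
  | cons τ l ih =>
    have h0 : tr a = τ := by exact h 0 (by simp)
    have hst : stFromTr tr (a + 1) = applyTr τ (stFromTr tr a) := by
      rw [show stFromTr tr (a + 1) = applyTr (tr a) (stFromTr tr a) from rfl, h0]
    rw [List.length_cons, show a + (l.length + 1) = (a + 1) + l.length by omega,
      ih (a + 1) (fun d hd => by
        have := h (d + 1) (by simpa using Nat.succ_lt_succ hd)
        simpa [Nat.add_right_comm, Nat.add_assoc] using this),
      List.foldl_cons, hst]

lemma stdTr_decomp (hn : 0 < n) (cho : Collection n) {R d : ℕ}
    (hd : d < (stdBlock cho (R + 1)).length) :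
    stdTr cho ((dF cho R).length + d) = (stdBlock cho (R + 1))[d] := by
  have hlen : (dF cho (R + 1)).length
      = (dF cho R).length + (stdBlock cho (R + 1)).length := by
    rw [dF_succ, List.length_append]
  have h1 : (dF cho R).length + d < (dF cho (R + 1)).length := by omega
  rw [stdTr_eq hn cho h1, List.getD_eq_getElem _ _ h1]
  have h2 : (dF cho (R + 1))[(dF cho R).length + d]'h1
      = (dF cho R ++ stdBlock cho (R + 1))[(dF cho R).length + d]'(by
          rw [← dF_succ]; exact h1) := by
    congr 1 <;> rw [dF_succ]
  rw [h2, List.getElem_append_right (by omega)]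
  congr 1
  omega

lemma st_dF_succ (hn : 0 < n) (cho : Collection n) (R : ℕ) :
    stFromTr (stdTr cho) ((dF cho (R + 1)).length)
      = (stdBlock cho (R + 1)).foldl (fun st τ => applyTr τ st)
          (stFromTr (stdTr cho) ((dF cho R).length)) := by
  have hlen : (dF cho (R + 1)).length
      = (dF cho R).length + (stdBlock cho (R + 1)).length := by
    rw [dF_succ, List.length_append]
  rw [hlen]
  exact stFromTr_add _ _ _ (fun d hd => stdTr_decomp hn cho hd)

lemma count_finRange (j : Fin n) : (List.finRange n).count j = 1 :=
  List.count_eq_one_of_mem (List.nodup_finRange n) (List.mem_finRange j)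

lemma round_dF (hn : 0 < n) (cho : Collection n) :
    ∀ R (j : Fin n), ((stFromTr (stdTr cho) ((dF cho R).length)) j).round = R + 1 := by
  intro R
  induction R with
  | zero => intro j; rfl
  | succ R ih =>
    intro j
    rw [st_dF_succ hn cho R]
    have hb : stdBlock cho (R + 1)
        = (lateList cho (R + 1) ++ onTimeList cho (R + 1)) ++ nextsList n := rfl
    rw [hb, List.foldl_append]
    unfold nextsList
    rw [round_foldl_next,
      round_foldl_deliver _ (fun τ h => isDel_of_mem_DL h), ih, count_finRange]

lemma decomp (hn : 0 < n) (cho : Collection n) (i : ℕ) :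
    ∃ R d, i = (dF cho R).length + d ∧ d < (stdBlock cho (R + 1)).length := by
  induction i with
  | zero => exact ⟨0, 0, rfl, lt_of_lt_of_le hn (block_len cho 1)⟩
  | succ i ih =>
    obtain ⟨R, d, hi, hd⟩ := ih
    by_cases h : d + 1 < (stdBlock cho (R + 1)).length
    · exact ⟨R, d + 1, by omega, h⟩
    · refine ⟨R + 1, 0, ?_, lt_of_lt_of_le hn (block_len cho (R + 2))⟩
      have : (dF cho (R + 1)).length
          = (dF cho R).length + (stdBlock cho (R + 1)).length := by
        rw [dF_succ, List.length_append]
      omega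

lemma stdTr_ne_fin (hn : 0 < n) (cho : Collection n) (i : ℕ) :
    stdTr cho i ≠ Transition.fin := by
  obtain ⟨R, d, rfl, hd⟩ := decomp hn cho i
  rw [stdTr_decomp hn cho hd]
  intro h
  have hm : Transition.fin ∈ stdBlock cho (R + 1) := List.mem_iff_getElem.2 ⟨d, hd, h⟩
  have hb : stdBlock cho (R + 1)
      = (lateList cho (R + 1) ++ onTimeList cho (R + 1)) ++ nextsList n := rfl
  rw [hb, List.mem_append] at hm
  rcases hm with hm | hm
  · obtain ⟨r, k, j, h⟩ := isDel_of_mem_DL hm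
    cases h
  · obtain ⟨j, h⟩ := mem_nextsList.1 hm
    cases h

lemma sender_round (hn : 0 < n) (cho : Collection n) {i r : ℕ} {k j : Fin n}
    (h : stdTr cho i = Transition.deliver r k j) :
    r ≤ ((stFromTr (stdTr cho) i) k).round := by
  obtain ⟨R, d, rfl, hd⟩ := decomp hn cho i
  rw [stdTr_decomp hn cho hd] at h
  set D := lateList cho (R + 1) ++ onTimeList cho (R + 1) with hD
  have hb : stdBlock cho (R + 1) = D ++ nextsList n := rfl
  have hdlen : (D ++ nextsList n).length = (stdBlock cho (R + 1)).length := by rw [hb]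
  have hgetb : ∀ (e : ℕ) (he : e < (stdBlock cho (R + 1)).length),
      (stdBlock cho (R + 1))[e] = (D ++ nextsList n)[e]'(by omega) := by
    intro e he; congr 1
  have hdD : d < D.length := by
    by_contra hge
    push_neg at hge
    have hlt2 : d - D.length < (nextsList n).length := by
      rw [hb, List.length_append] at hd; omega
    have h2 : (nextsList n)[d - D.length]'hlt2 = Transition.deliver r k j := by
      rw [← h, hgetb d hd, List.getElem_append_right hge]
    obtain ⟨j', hj'⟩ := mem_nextsList.1 (List.mem_iff_getElem.2 ⟨_, hlt2, h2⟩)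
    cases hj'
  have hDd : D[d] = Transition.deliver r k j := by
    rw [← List.getElem_append_left (bs := nextsList n) hdD, ← hgetb d hd, h]
    simp only [List.length_append]; omega
  -- the state at the delivery
  have htake : (D.take d).length = d := by simp; omega
  have hst : stFromTr (stdTr cho) ((dF cho R).length + d)
      = (D.take d).foldl (fun st τ => applyTr τ st)
          (stFromTr (stdTr cho) ((dF cho R).length)) := by
    conv_lhs => rw [show d = (D.take d).length from htake.symm]
    refine stFromTr_add _ _ _ (fun e he => ?_)
    have heD : e < D.length := by omega
    have he' : e < (stdBlock cho (R + 1)).length := by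
      rw [hb, List.length_append]; omega
    rw [stdTr_decomp hn cho he', List.getElem_take, hgetb e he',
      List.getElem_append_left heD]
  rw [hst, round_foldl_deliver _ (fun τ hτ => isDel_of_mem_DL (List.mem_of_mem_take hτ)),
    round_dF hn cho R k]
  -- bound r
  have hmem : Transition.deliver r k j ∈ D := List.mem_iff_getElem.2 ⟨d, hdD, hDd⟩
  rcases List.mem_append.1 hmem with hm | hm
  · have := (deliver_mem_lateList.1 hm).2.1
    omega
  · have := (deliver_mem_onTimeList.1 hm).1
    omega

lemma nodup_lateList (cho : Collection n) (ρ : ℕ) : (lateList cho ρ).Nodup := by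
  unfold lateList
  split
  · simp
  · rw [List.nodup_flatMap]
    refine ⟨fun j _ => ?_, ?_⟩
    · exact (Finset.nodup_toList _).map (fun a b e => by
        injection e)
    · refine (List.nodup_finRange n).imp (fun {a b} hab => ?_)
      intro τ hτa hτb
      simp only [List.mem_map] at hτa hτb
      obtain ⟨k1, -, rfl⟩ := hτa
      obtain ⟨k2, -, he⟩ := hτb
      injection he with e1 e2 e3
      exact hab e3.symm

lemma nodup_onTimeList (cho : Collection n) (ρ : ℕ) : (onTimeList cho ρ).Nodup := by
  unfold onTimeList
  rw [List.nodup_flatMap]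
  refine ⟨fun j _ => ?_, ?_⟩
  · exact (Finset.nodup_toList _).map (fun a b e => by injection e)
  · refine (List.nodup_finRange n).imp (fun {a b} hab => ?_)
    intro τ hτa hτb
    simp only [List.mem_map] at hτa hτb
    obtain ⟨k1, -, rfl⟩ := hτa
    obtain ⟨k2, -, he⟩ := hτb
    injection he with e1 e2 e3
    exact hab e3.symm

lemma count_block (cho : Collection n) (r : ℕ) (k j : Fin n) (m : ℕ) :
    List.count (Transition.deliver r k j) (stdBlock cho (m + 1))
      ≤ if 0 < r ∧ m = (if k ∈ cho r j then r - 1 else r) then 1 else 0 := by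
  have hb : stdBlock cho (m + 1)
      = (lateList cho (m + 1) ++ onTimeList cho (m + 1)) ++ nextsList n := rfl
  rw [hb, List.count_append, List.count_append]
  have hnx : List.count (Transition.deliver r k j) (nextsList n) = 0 := by
    refine List.count_eq_zero_of_not_mem (fun hm => ?_)
    obtain ⟨j', hj'⟩ := mem_nextsList.1 hm
    cases hj'
  rw [hnx]
  by_cases hl : Transition.deliver r k j ∈ lateList cho (m + 1)
  · obtain ⟨h2, hr, hk⟩ := deliver_mem_lateList.1 hl
    have hrm : r = m := by omega
    have hko : Transition.deliver r k j ∉ onTimeList cho (m + 1) := by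
      intro ho
      have := (deliver_mem_onTimeList.1 ho).1
      omega
    rw [List.count_eq_zero_of_not_mem hko]
    have hc1 := List.nodup_iff_count_le_one.1 (nodup_lateList cho (m + 1))
      (Transition.deliver r k j)
    have hk' : k ∉ cho r j := by
      have he : m + 1 - 1 = r := by omega
      rwa [he] at hk
    have hcond : 0 < r ∧ m = (if k ∈ cho r j then r - 1 else r) := by
      rw [if_neg hk']
      omega
    rw [if_pos hcond]
    omega
  · rw [List.count_eq_zero_of_not_mem hl]
    by_cases ho : Transition.deliver r k j ∈ onTimeList cho (m + 1)
    · obtain ⟨hr, hk⟩ := deliver_mem_onTimeList.1 ho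
      subst hr
      have hcond : 0 < m + 1 ∧ m = (if k ∈ cho (m + 1) j then m + 1 - 1 else m + 1) := by
        rw [if_pos hk]; omega
      rw [if_pos hcond]
      have hc1 := List.nodup_iff_count_le_one.1 (nodup_onTimeList cho (m + 1))
        (Transition.deliver (m + 1) k j)
      omega
    · rw [List.count_eq_zero_of_not_mem ho]
      split <;> omega

lemma count_dF_aux (cho : Collection n) (r : ℕ) (k j : Fin n) (R : ℕ) :
    List.count (Transition.deliver r k j) (dF cho R)
      ≤ if 0 < r ∧ (if k ∈ cho r j then r - 1 else r) < R then 1 else 0 := by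
  induction R with
  | zero => simp [dF]
  | succ R ih =>
    rw [dF_succ, List.count_append]
    have hb := count_block cho r k j R
    set m₀ := if k ∈ cho r j then r - 1 else r with hm
    by_cases h0 : 0 < r
    · by_cases hR : R = m₀
      · rw [if_neg (by omega)] at ih
        rw [if_pos ⟨h0, by omega⟩]
        rw [if_pos ⟨h0, hR⟩] at hb
        omega
      · rw [if_neg (by intro hc; exact hR hc.2)] at hb
        by_cases hlt : m₀ < R
        · rw [if_pos ⟨h0, hlt⟩] at ih
          rw [if_pos ⟨h0, by omega⟩]
          omega
        · rw [if_neg (by omega)] at ih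
          rw [if_neg (by omega)]
          omega
    · rw [if_neg (by omega)] at ih ⊢
      rw [if_neg (by omega)] at hb
      omega

lemma count_dF (cho : Collection n) (r : ℕ) (k j : Fin n) (R : ℕ) :
    List.count (Transition.deliver r k j) (dF cho R) ≤ 1 := by
  have h := count_dF_aux cho r k j R
  have h2 : (if 0 < r ∧ (if k ∈ cho r j then r - 1 else r) < R then 1 else 0) ≤ 1 := by
    by_cases hc : 0 < r ∧ (if k ∈ cho r j then r - 1 else r) < R
    · rw [if_pos hc]
    · rw [if_neg hc]; omega
  omega

lemma deliver_unique (hn : 0 < n) (cho : Collection n) {r : ℕ} {k j : Fin n} {i i' : ℕ}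
    (h : stdTr cho i = Transition.deliver r k j)
    (h' : stdTr cho i' = Transition.deliver r k j) : i = i' := by
  by_contra hne
  wlog hlt : i < i' generalizing i i'
  · exact this h' h (Ne.symm hne) (by omega)
  have hi' : i' < (dF cho (i' + 1)).length :=
    lt_of_lt_of_le (Nat.lt_succ_self i') (dF_len hn cho (i' + 1))
  set L := dF cho (i' + 1) with hL
  have hi : i < L.length := by omega
  have e1 : L[i] = Transition.deliver r k j := by
    rw [← List.getD_eq_getElem L Transition.fin hi, ← stdTr_eq hn cho hi, h]
  have e2 : L[i']'hi' = Transition.deliver r k j := by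
    rw [← List.getD_eq_getElem L Transition.fin hi', ← stdTr_eq hn cho hi', h']
  have m1 : Transition.deliver r k j ∈ L.take i' := by
    rw [List.mem_iff_getElem]
    exact ⟨i, by rw [List.length_take]; omega, by rw [List.getElem_take]; exact e1⟩
  have m2 : Transition.deliver r k j ∈ L.drop i' := by
    rw [List.mem_iff_getElem]
    refine ⟨0, by rw [List.length_drop]; omega, ?_⟩
    rw [List.getElem_drop]
    simpa using e2
  have h2 : 2 ≤ List.count (Transition.deliver r k j) L := by
    have c1 := List.count_pos_iff.2 m1
    have c2 := List.count_pos_iff.2 m2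
    have : List.count (Transition.deliver r k j) (L.take i')
        + List.count (Transition.deliver r k j) (L.drop i')
        = List.count (Transition.deliver r k j) L := by
      rw [← List.count_append, List.take_append_drop]
    omega
  have hc := count_dF cho r k j (i' + 1)
  rw [← hL] at hc
  omega

lemma deliver_exists (hn : 0 < n) (cho : Collection n) {r : ℕ} (hr : 0 < r) (k j : Fin n) :
    ∃ i, stdTr cho i = Transition.deliver r k j := by
  have key : ∀ R, Transition.deliver r k j ∈ dF cho R →
      ∃ i, stdTr cho i = Transition.deliver r k j := by
    intro R hm
    obtain ⟨i, hlen, he⟩ := List.mem_iff_getElem.1 hm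
    exact ⟨i, by rw [stdTr_eq hn cho hlen, List.getD_eq_getElem _ _ hlen, he]⟩
  by_cases hk : k ∈ cho r j
  · refine key r ?_
    have hmb : Transition.deliver r k j ∈ stdBlock cho r := by
      have : Transition.deliver r k j ∈ onTimeList cho r :=
        deliver_mem_onTimeList.2 ⟨rfl, hk⟩
      exact List.mem_append_left _ (List.mem_append_right _ this)
    have hr1 : r = (r - 1) + 1 := by omega
    rw [hr1, dF_succ]
    exact List.mem_append_right _ (by rw [← hr1]; exact hmb)
  · refine key (r + 1) ?_
    have hmb : Transition.deliver r k j ∈ stdBlock cho (r + 1) := by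
      have : Transition.deliver r k j ∈ lateList cho (r + 1) := by
        refine deliver_mem_lateList.2 ⟨by omega, by omega, ?_⟩
        have : r + 1 - 1 = r := by omega
        rwa [this]
      exact List.mem_append_left _ (List.mem_append_left _ this)
    rw [dF_succ]
    exact List.mem_append_right _ hmb

lemma inRange_std (cho : Collection n) (i : ℕ) : (standardRun cho).inRange i := by
  simp only [Run.inRange, standardRun]
  exact WithTop.coe_lt_top i

end StdAux

/-- A standard run of any Heard-Of collection is a run of any Delivered
predicate that contains the total Delivered collection. -/
theorem standardRun_runOfPred {n : ℕ} (hn : 0 < n) (cho : Collection n)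
    (PDel : DeliveredPred n) (htot : totalCollection n ∈ PDel) :
    (standardRun cho).RunOfPred PDel := by
  refine ⟨totalCollection n, htot, ⟨⟨?_, ?_, ?_, ?_, ?_⟩, ?_⟩⟩
  · intro j; rfl
  · intro i _; rfl
  · intro i _ hfin
    exact absurd hfin (StdAux.stdTr_ne_fin hn cho i)
  · intro i _ r k j h
    exact StdAux.sender_round hn cho h
  · intro r k j i i' _ _ h h'
    exact StdAux.deliver_unique hn cho h h'
  · intro r k j hr
    constructor
    · rintro -
      obtain ⟨i, hi⟩ := StdAux.deliver_exists hn cho hr k j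
      exact ⟨i, StdAux.inRange_std cho i, hi⟩
    · rintro -
      refine ⟨by simp [totalCollection], (StdAux.dF cho r).length,
        StdAux.inRange_std cho _, ?_⟩
      have := StdAux.round_dF hn cho r j
      show r ≤ ((stFromTr (stdTr cho) ((StdAux.dF cho r).length)) j).round
      omega
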